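/- Let C_i = {x ∈ {0,1}^n : Σ_{j∈N} x_j ≡ 0 (mod 2)} be a single parity-check code with support N ⊆ {1,...,n}. Then conv(C_i) = {x ∈ [0,1]^n : Σ_{j∈S} x_j − Σ_{j∈N\S} x_j ≤ |S| − 1 for all S ⊆ N with |S| odd}. -/

import Mathlib

open Finset Set
open scoped Classical

namespace SPCaux

variable {n : ℕ}

/-- The polytope cut out by box and forbidden-set inequalities. -/
def spcPoly (N : Finset (Fin n)) : Set (Fin n → ℝ) :=
  {x : Fin n → ℝ | (∀ j, 0 ≤ x j ∧ x j ≤ 1) ∧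
      ∀ S ⊆ N, Odd S.card →
        ∑ j ∈ S, x j - ∑ j ∈ N \ S, x j ≤ (S.card : ℝ) - 1}

/-- The single parity check code. -/
def spcCode (N : Finset (Fin n)) : Set (Fin n → ℝ) :=
  {x : Fin n → ℝ | (∀ j, x j = 0 ∨ x j = 1) ∧ ∃ k : ℕ, ∑ j ∈ N, x j = 2 * k}

/-- The linear functional of the forbidden set inequality. -/
def Eval (N S : Finset (Fin n)) (v : Fin n → ℝ) : ℝ :=
  ∑ j ∈ S, v j - ∑ j ∈ N \ S, v j

lemma Eval_add_smul (N S : Finset (Fin n)) (x d : Fin n → ℝ) (c : ℝ) :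
    Eval N S (x + c • d) = Eval N S x + c * Eval N S d := by
  simp only [Eval, Pi.add_apply, Pi.smul_apply, smul_eq_mul, Finset.sum_add_distrib,
    ← Finset.mul_sum]
  ring

lemma sum_01 {x : Fin n → ℝ} (hx : ∀ j, x j = 0 ∨ x j = 1) (T : Finset (Fin n)) :
    ∑ j ∈ T, x j = ((T.filter fun j => x j = 1).card : ℝ) := by
  rw [← Finset.sum_filter_add_sum_filter_not T (fun j => x j = 1)]
  have h1 : ∑ j ∈ T.filter (fun j => x j = 1), x j
      = ((T.filter fun j => x j = 1).card : ℝ) := by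
    rw [Finset.sum_congr rfl (fun j hj => (Finset.mem_filter.1 hj).2)]
    simp
  have h2 : ∑ j ∈ T.filter (fun j => ¬ x j = 1), x j = 0 := by
    refine Finset.sum_eq_zero fun j hj => ?_
    rcases hx j with h | h
    · exact h
    · exact absurd h (Finset.mem_filter.1 hj).2
  rw [h1, h2, add_zero]

lemma spcCode_subset (N : Finset (Fin n)) : spcCode N ⊆ spcPoly N := by
  rintro x ⟨hx01, k, hk⟩
  constructor
  · intro j
    rcases hx01 j with h | h <;> simp [h]
  · intro S hS hodd
    set m := (S.filter fun j => x j = 1).card with hm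
    set p := ((N \ S).filter fun j => x j = 1).card with hp
    have hSsum : ∑ j ∈ S, x j = (m : ℝ) := sum_01 hx01 S
    have hNSsum : ∑ j ∈ N \ S, x j = (p : ℝ) := sum_01 hx01 (N \ S)
    have hNsum : ∑ j ∈ N, x j = ∑ j ∈ S, x j + ∑ j ∈ N \ S, x j := by
      rw [← Finset.sum_sdiff hS]; ring
    have hmp : (m : ℝ) + p = 2 * k := by rw [← hSsum, ← hNSsum, ← hNsum, hk]
    have hmpn : m + p = 2 * k := by exact_mod_cast hmp
    have hmle : m ≤ S.card := Finset.card_filter_le _ _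
    obtain ⟨t, ht⟩ := hodd
    have : m + 1 ≤ S.card + p := by omega
    rw [hSsum, hNSsum]
    have : (m : ℝ) + 1 ≤ (S.card : ℝ) + p := by exact_mod_cast this
    linarith

lemma spcCode_finite (N : Finset (Fin n)) : (spcCode N).Finite := by
  have : spcCode N ⊆ Set.pi Set.univ (fun _ : Fin n => ({0, 1} : Set ℝ)) := by
    rintro x ⟨hx01, -⟩ j -
    rcases hx01 j with h | h <;> simp [h]
  exact Set.Finite.subset (Set.Finite.pi fun _ => (Set.finite_singleton _).insert _) this

lemma spcPoly_convex (N : Finset (Fin n)) : Convex ℝ (spcPoly N) := by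
  intro x hx y hy a b ha hb hab
  constructor
  · intro j
    have h1 := hx.1 j
    have h2 := hy.1 j
    constructor
    · have := add_nonneg (mul_nonneg ha h1.1) (mul_nonneg hb h2.1)
      simpa using this
    · have : a * x j + b * y j ≤ a * 1 + b * 1 :=
        add_le_add (mul_le_mul_of_nonneg_left h1.2 ha) (mul_le_mul_of_nonneg_left h2.2 hb)
      simpa [hab] using by linarith
  · intro S hS hodd
    have h1 := hx.2 S hS hodd
    have h2 := hy.2 S hS hodd
    simp only [Pi.add_apply, Pi.smul_apply, smul_eq_mul, Finset.sum_add_distrib, ← Finset.mul_sum]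
    nlinarith

lemma spcPoly_isClosed (N : Finset (Fin n)) : IsClosed (spcPoly N) := by
  have heq : spcPoly N = (⋂ j, {x : Fin n → ℝ | 0 ≤ x j} ∩ {x : Fin n → ℝ | x j ≤ 1}) ∩
      (⋂ S ∈ {S : Finset (Fin n) | S ⊆ N ∧ Odd S.card},
        {x : Fin n → ℝ | ∑ j ∈ S, x j - ∑ j ∈ N \ S, x j ≤ (S.card : ℝ) - 1}) := by
    ext x
    simp only [spcPoly, Set.mem_setOf_eq, Set.mem_inter_iff, Set.mem_iInter, Set.mem_inter_iff,
      Set.mem_setOf_eq]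
    constructor
    · rintro ⟨h1, h2⟩
      exact ⟨fun j => h1 j, fun S hS => h2 S hS.1 hS.2⟩
    · rintro ⟨h1, h2⟩
      exact ⟨fun j => h1 j, fun S hS hodd => h2 S ⟨hS, hodd⟩⟩
  rw [heq]
  refine IsClosed.inter (isClosed_iInter fun j => IsClosed.inter ?_ ?_)
    (isClosed_biInter fun S _ => ?_)
  · exact isClosed_le continuous_const (continuous_apply j)
  · exact isClosed_le (continuous_apply j) continuous_const
  · exact isClosed_le (Continuous.sub (continuous_finset_sum _ fun j _ => continuous_apply j)
      (continuous_finset_sum _ fun j _ => continuous_apply j)) continuous_const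

lemma spcPoly_isCompact (N : Finset (Fin n)) : IsCompact (spcPoly N) := by
  have hsub : spcPoly N ⊆ Set.pi Set.univ (fun _ : Fin n => Set.Icc (0 : ℝ) 1) := by
    intro x hx j _
    exact ⟨(hx.1 j).1, (hx.1 j).2⟩
  exact (isCompact_univ_pi fun _ => isCompact_Icc).of_isClosed_subset (spcPoly_isClosed N) hsub

/-- Perturbation helper: if a direction `d` vanishes on every tight forbidden set
inequality and is supported on strictly fractional coordinates, then we can move in
both directions. -/
lemma exists_perturb (N : Finset (Fin n)) (x d : Fin n → ℝ) (hx : x ∈ spcPoly N)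
    (hbox : ∀ l, d l ≠ 0 → 0 < x l ∧ x l < 1)
    (hb : ∀ l, |d l| ≤ 1)
    (htight : ∀ S ⊆ N, Odd S.card → Eval N S x = (S.card : ℝ) - 1 → Eval N S d = 0) :
    ∃ ε : ℝ, 0 < ε ∧ x + ε • d ∈ spcPoly N ∧ x - ε • d ∈ spcPoly N := by
  set T : Finset ℝ := insert 1
      (((Finset.univ.filter fun l => d l ≠ 0).image fun l => min (x l) (1 - x l)) ∪
        ((N.powerset.filter fun S => Odd S.card ∧ Eval N S x ≠ (S.card : ℝ) - 1).image
          fun S => ((S.card : ℝ) - 1 - Eval N S x) / (n + 1))) with hT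
  have hTne : T.Nonempty := Finset.insert_nonempty _ _
  set ε := T.min' hTne with hε
  have hmemT : ∀ y ∈ T, 0 < y := by
    intro y hy
    rw [hT] at hy
    rcases Finset.mem_insert.1 hy with h | h
    · rw [h]; norm_num
    rcases Finset.mem_union.1 h with h | h
    · obtain ⟨l, hl, rfl⟩ := Finset.mem_image.1 h
      have hl' := hbox l (Finset.mem_filter.1 hl).2
      exact lt_min hl'.1 (by linarith [hl'.2])
    · obtain ⟨S, hS, rfl⟩ := Finset.mem_image.1 h
      have hS' := Finset.mem_filter.1 hS
      have hle := hx.2 S (Finset.mem_powerset.1 hS'.1) hS'.2.1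
      have : Eval N S x < (S.card : ℝ) - 1 := lt_of_le_of_ne hle hS'.2.2
      have hn1 : (0 : ℝ) < n + 1 := by positivity
      exact div_pos (by linarith) hn1
  have hεpos : 0 < ε := hmemT _ (T.min'_mem hTne)
  have hεle : ∀ y ∈ T, ε ≤ y := fun y hy => Finset.min'_le T y hy
  have key : ∀ c : ℝ, |c| ≤ ε → x + c • d ∈ spcPoly N := by
    intro c hc
    have hcabs := abs_le.1 hc
    constructor
    · intro l
      by_cases hdl : d l = 0
      · simp only [Pi.add_apply, Pi.smul_apply, smul_eq_mul, hdl, mul_zero, add_zero]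
        exact hx.1 l
      · have hmin : min (x l) (1 - x l) ∈ T := by
          rw [hT]
          refine Finset.mem_insert_of_mem (Finset.mem_union_left _ ?_)
          exact Finset.mem_image.2 ⟨l, Finset.mem_filter.2 ⟨Finset.mem_univ l, hdl⟩, rfl⟩
        have h1 : ε ≤ min (x l) (1 - x l) := hεle _ hmin
        have h2 : |c * d l| ≤ ε := by
          calc |c * d l| = |c| * |d l| := abs_mul _ _
            _ ≤ ε * 1 := mul_le_mul hc (hb l) (abs_nonneg _) (le_of_lt hεpos)
            _ = ε := mul_one _
        have h3 := abs_le.1 h2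
        have h4 : ε ≤ x l := le_trans h1 (min_le_left _ _)
        have h5 : ε ≤ 1 - x l := le_trans h1 (min_le_right _ _)
        constructor
        · simp only [Pi.add_apply, Pi.smul_apply, smul_eq_mul]; linarith
        · simp only [Pi.add_apply, Pi.smul_apply, smul_eq_mul]; linarith
    · intro S hS hodd
      have heval : Eval N S (x + c • d) = Eval N S x + c * Eval N S d :=
        Eval_add_smul N S x d c
      show ∑ j ∈ S, (x + c • d) j - ∑ j ∈ N \ S, (x + c • d) j ≤ (S.card : ℝ) - 1
      have hgoal : Eval N S (x + c • d) ≤ (S.card : ℝ) - 1 → _ := id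
      by_cases ht : Eval N S x = (S.card : ℝ) - 1
      · have hd0 := htight S hS hodd ht
        show Eval N S (x + c • d) ≤ (S.card : ℝ) - 1
        rw [heval, hd0, mul_zero, add_zero, ht]
      · -- slack case
        have hslackT : ((S.card : ℝ) - 1 - Eval N S x) / (n + 1) ∈ T := by
          rw [hT]
          refine Finset.mem_insert_of_mem (Finset.mem_union_right _ ?_)
          exact Finset.mem_image.2 ⟨S, Finset.mem_filter.2
            ⟨Finset.mem_powerset.2 hS, hodd, ht⟩, rfl⟩
        have h1 : ε ≤ ((S.card : ℝ) - 1 - Eval N S x) / (n + 1) := hεle _ hslackT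
        -- bound |Eval N S d| ≤ n + 1
        have hcard : (S.card : ℝ) + ((N \ S).card : ℝ) ≤ (n : ℝ) + 1 := by
          have h2 : S.card + (N \ S).card = N.card := by
            rw [Finset.card_sdiff_of_subset hS]
            have := Finset.card_le_card hS
            omega
          have h3 : N.card ≤ n := by
            have := Finset.card_le_univ N
            simpa using this
          have h4 : S.card + (N \ S).card ≤ n := by omega
          calc (S.card : ℝ) + ((N \ S).card : ℝ)
              = ((S.card + (N \ S).card : ℕ) : ℝ) := by push_cast; ring
            _ ≤ (n : ℝ) := by exact_mod_cast h4
            _ ≤ (n : ℝ) + 1 := by linarith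
        have hEd : |Eval N S d| ≤ (n : ℝ) + 1 := by
          have hS1 : |∑ j ∈ S, d j| ≤ (S.card : ℝ) := by
            calc |∑ j ∈ S, d j| ≤ ∑ j ∈ S, |d j| := Finset.abs_sum_le_sum_abs _ _
              _ ≤ ∑ _j ∈ S, (1 : ℝ) := Finset.sum_le_sum fun j _ => hb j
              _ = (S.card : ℝ) := by simp
          have hS2 : |∑ j ∈ N \ S, d j| ≤ ((N \ S).card : ℝ) := by
            calc |∑ j ∈ N \ S, d j| ≤ ∑ j ∈ N \ S, |d j| := Finset.abs_sum_le_sum_abs _ _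
              _ ≤ ∑ _j ∈ N \ S, (1 : ℝ) := Finset.sum_le_sum fun j _ => hb j
              _ = ((N \ S).card : ℝ) := by simp
          calc |Eval N S d| ≤ |∑ j ∈ S, d j| + |∑ j ∈ N \ S, d j| := abs_sub _ _
            _ ≤ (S.card : ℝ) + ((N \ S).card : ℝ) := add_le_add hS1 hS2
            _ ≤ (n : ℝ) + 1 := hcard
        have hn1 : (0 : ℝ) < (n : ℝ) + 1 := by positivity
        have h2 : |c * Eval N S d| ≤ (S.card : ℝ) - 1 - Eval N S x := by
          calc |c * Eval N S d| = |c| * |Eval N S d| := abs_mul _ _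
            _ ≤ (((S.card : ℝ) - 1 - Eval N S x) / (n + 1)) * ((n : ℝ) + 1) :=
              mul_le_mul (le_trans hc h1) hEd (abs_nonneg _)
                (le_trans (le_of_lt hεpos) h1)
            _ = (S.card : ℝ) - 1 - Eval N S x := by field_simp
        have h3 := abs_le.1 h2
        show Eval N S (x + c • d) ≤ (S.card : ℝ) - 1
        rw [heval]
        linarith
  refine ⟨ε, hεpos, key ε (by rw [abs_of_pos hεpos]), ?_⟩
  have := key (-ε) (by rw [abs_neg, abs_of_pos hεpos])
  have heq : x + (-ε) • d = x - ε • d := by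
    funext l; simp; ring
  rwa [heq] at this

/-- The "contribution" function of a forbidden set inequality. -/
def gfun (S : Finset (Fin n)) (x : Fin n → ℝ) : Fin n → ℝ :=
  fun l => if l ∈ S then 1 - x l else x l

lemma sum_gfun (N S : Finset (Fin n)) (x : Fin n → ℝ) (hS : S ⊆ N) :
    ∑ l ∈ N, gfun S x l = (S.card : ℝ) - Eval N S x := by
  have hsplit := Finset.sum_sdiff (f := gfun S x) hS
  have h3 : ∑ l ∈ S, gfun S x l = (S.card : ℝ) - ∑ l ∈ S, x l := by
    rw [Finset.sum_congr rfl (fun l hl => by simp [gfun, hl] :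
      ∀ l ∈ S, gfun S x l = 1 - x l)]
    rw [Finset.sum_sub_distrib, Finset.sum_const, nsmul_eq_mul, mul_one]
  have h4 : ∑ l ∈ N \ S, gfun S x l = ∑ l ∈ N \ S, x l :=
    Finset.sum_congr rfl fun l hl => by simp [gfun, (Finset.mem_sdiff.1 hl).2]
  rw [← hsplit, h3, h4, Eval]; ring

lemma gfun_nonneg {N : Finset (Fin n)} {x : Fin n → ℝ} (hx : x ∈ spcPoly N)
    (S : Finset (Fin n)) (l : Fin n) : 0 ≤ gfun S x l := by
  unfold gfun; split_ifs
  · linarith [(hx.1 l).2]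
  · exact (hx.1 l).1

lemma gfun_pos {N : Finset (Fin n)} {x : Fin n → ℝ} (hx : x ∈ spcPoly N)
    (S : Finset (Fin n)) (l : Fin n) (h0 : x l ≠ 0) (h1 : x l ≠ 1) :
    0 < gfun S x l ∧ gfun S x l < 1 := by
  have hb := hx.1 l
  have hb0 : 0 < x l := lt_of_le_of_ne hb.1 (Ne.symm h0)
  have hb1 : x l < 1 := lt_of_le_of_ne hb.2 h1
  unfold gfun; split_ifs
  · constructor <;> linarith
  · constructor <;> linarith

/-- Structure of tight forbidden set inequalities. -/
lemma tight_struct {N : Finset (Fin n)} {x : Fin n → ℝ} (hx : x ∈ spcPoly N)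
    {j0 : Fin n} (hj0 : j0 ∈ N) (h0 : x j0 ≠ 0) (h1 : x j0 ≠ 1)
    {S : Finset (Fin n)} (hS : S ⊆ N)
    (ht : Eval N S x = (S.card : ℝ) - 1) :
    (∀ l ∈ N, (x l = 0 ∨ x l = 1) → gfun S x l = 0) ∧
    ∑ l ∈ N.filter (fun l => x l ≠ 0 ∧ x l ≠ 1), gfun S x l = 1 := by
  have hg : ∑ l ∈ N, gfun S x l = 1 := by
    rw [sum_gfun N S x hS, ht]; ring
  have hj0pos := gfun_pos hx S j0 h0 h1
  have hzero : ∀ l ∈ N, (x l = 0 ∨ x l = 1) → gfun S x l = 0 := by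
    intro l hl hint
    have hne : j0 ≠ l := by
      rintro rfl
      rcases hint with h | h
      exacts [h0 h, h1 h]
    have hsub : ({j0, l} : Finset (Fin n)) ⊆ N := by
      intro i hi
      rcases Finset.mem_insert.1 hi with rfl | hi
      · exact hj0
      · rw [Finset.mem_singleton.1 hi]; exact hl
    have hle : gfun S x j0 + gfun S x l ≤ 1 := by
      have := Finset.sum_le_sum_of_subset_of_nonneg hsub
        (fun i hi _ => gfun_nonneg hx S i)
      rwa [Finset.sum_pair hne, hg] at this
    have hlt : gfun S x l < 1 := by linarith [hj0pos.1]
    unfold gfun at hlt ⊢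
    rcases hint with h | h <;> by_cases hmem : l ∈ S
    · rw [if_pos hmem, h] at hlt; norm_num at hlt
    · rw [if_neg hmem]; exact h
    · rw [if_pos hmem, h]; norm_num
    · rw [if_neg hmem, h] at hlt; norm_num at hlt
  refine ⟨hzero, ?_⟩
  have hsplit := Finset.sum_filter_add_sum_filter_not N
    (fun l => x l ≠ 0 ∧ x l ≠ 1) (gfun S x)
  have hz2 : ∑ l ∈ N.filter (fun l => ¬(x l ≠ 0 ∧ x l ≠ 1)), gfun S x l = 0 := by
    refine Finset.sum_eq_zero fun l hl => ?_
    have hl' := Finset.mem_filter.1 hl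
    exact hzero l hl'.1 (by tauto)
  rw [hz2, add_zero, hg] at hsplit
  exact hsplit

/-- Integral coordinates are determined on every tight set. -/
lemma tight_mem_iff {N : Finset (Fin n)} {x : Fin n → ℝ} (hx : x ∈ spcPoly N)
    {j0 : Fin n} (hj0 : j0 ∈ N) (h0 : x j0 ≠ 0) (h1 : x j0 ≠ 1)
    {S : Finset (Fin n)} (hS : S ⊆ N)
    (ht : Eval N S x = (S.card : ℝ) - 1) :
    ∀ l ∈ N, (x l = 0 ∨ x l = 1) → (l ∈ S ↔ x l = 1) := by
  intro l hl hint
  have hz := (tight_struct hx hj0 h0 h1 hS ht).1 l hl hint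
  unfold gfun at hz
  constructor
  · intro hmem
    rw [if_pos hmem] at hz; linarith
  · intro hx1
    by_contra hmem
    rw [if_neg hmem, hx1] at hz; norm_num at hz

lemma exists_second_frac {N : Finset (Fin n)} {x : Fin n → ℝ} (hx : x ∈ spcPoly N)
    {j0 : Fin n} (hj0 : j0 ∈ N) (h0 : x j0 ≠ 0) (h1 : x j0 ≠ 1)
    {S : Finset (Fin n)} (hS : S ⊆ N)
    (ht : Eval N S x = (S.card : ℝ) - 1) :
    ∃ k ∈ N, (x k ≠ 0 ∧ x k ≠ 1) ∧ k ≠ j0 := by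
  by_contra hc
  push_neg at hc
  have hF : N.filter (fun l => x l ≠ 0 ∧ x l ≠ 1) = {j0} := by
    apply Finset.ext; intro l
    simp only [Finset.mem_filter, Finset.mem_singleton]
    constructor
    · rintro ⟨hlN, hfrac⟩; exact hc l hlN hfrac
    · rintro rfl; exact ⟨hj0, h0, h1⟩
  have h2 := (tight_struct hx hj0 h0 h1 hS ht).2
  rw [hF, Finset.sum_singleton] at h2
  exact absurd h2 (ne_of_lt (gfun_pos hx S j0 h0 h1).2)

/-- Any two tight forbidden set inequalities put a pair of fractional coordinates on the
same relative sides. -/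
lemma tight_sides {N : Finset (Fin n)} {x : Fin n → ℝ} (hx : x ∈ spcPoly N)
    {j k : Fin n} (hjN : j ∈ N) (hj0 : x j ≠ 0) (hj1 : x j ≠ 1)
    (hkN : k ∈ N) (hk0 : x k ≠ 0) (hk1 : x k ≠ 1)
    {S₁ S₂ : Finset (Fin n)} (hS₁ : S₁ ⊆ N) (hS₂ : S₂ ⊆ N)
    (hodd₁ : Odd S₁.card) (hodd₂ : Odd S₂.card)
    (ht₁ : Eval N S₁ x = (S₁.card : ℝ) - 1) (ht₂ : Eval N S₂ x = (S₂.card : ℝ) - 1) :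
    ((j ∈ S₁) ↔ (k ∈ S₁)) ↔ ((j ∈ S₂) ↔ (k ∈ S₂)) := by
  set F := N.filter (fun l => x l ≠ 0 ∧ x l ≠ 1) with hFdef
  have hjF : j ∈ F := Finset.mem_filter.2 ⟨hjN, hj0, hj1⟩
  have hkF : k ∈ F := Finset.mem_filter.2 ⟨hkN, hk0, hk1⟩
  have hFN : F ⊆ N := Finset.filter_subset _ _
  have hsum₁ := (tight_struct hx hjN hj0 hj1 hS₁ ht₁).2
  have hsum₂ := (tight_struct hx hjN hj0 hj1 hS₂ ht₂).2
  have hmem₁ := tight_mem_iff hx hjN hj0 hj1 hS₁ ht₁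
  have hmem₂ := tight_mem_iff hx hjN hj0 hj1 hS₂ ht₂
  set A₁ := S₁ ∩ F with hA₁
  set A₂ := S₂ ∩ F with hA₂
  set D := (A₁ \ A₂) ∪ (A₂ \ A₁) with hD
  have hDF : D ⊆ F := by
    intro l hl
    rcases Finset.mem_union.1 hl with h | h
    · exact (Finset.mem_inter.1 (Finset.mem_sdiff.1 h).1).2
    · exact (Finset.mem_inter.1 (Finset.mem_sdiff.1 h).1).2
  have hAS₁ : ∀ l ∈ F, (l ∈ A₁ ↔ l ∈ S₁) := fun l hl => by
    simp [hA₁, Finset.mem_inter, hl]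
  have hAS₂ : ∀ l ∈ F, (l ∈ A₂ ↔ l ∈ S₂) := fun l hl => by
    simp [hA₂, Finset.mem_inter, hl]
  have hDmem : ∀ l ∈ F, (l ∈ D ↔ ¬ (l ∈ S₁ ↔ l ∈ S₂)) := by
    intro l hl
    have h1 := hAS₁ l hl
    have h2 := hAS₂ l hl
    simp only [hD, Finset.mem_union, Finset.mem_sdiff]
    tauto
  have hfrac : ∀ l ∈ F, (x l ≠ 0 ∧ x l ≠ 1) := fun l hl => (Finset.mem_filter.1 hl).2
  have htot : ∑ l ∈ F, (gfun S₁ x l + gfun S₂ x l) = 2 := by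
    rw [Finset.sum_add_distrib, hsum₁, hsum₂]; norm_num
  have hDsum : ∑ l ∈ D, (gfun S₁ x l + gfun S₂ x l) = (D.card : ℝ) := by
    have hone : ∀ l ∈ D, gfun S₁ x l + gfun S₂ x l = 1 := by
      intro l hl
      have hlF := hDF hl
      have hop := (hDmem l hlF).1 hl
      unfold gfun
      by_cases h1 : l ∈ S₁ <;> by_cases h2 : l ∈ S₂
      · exact absurd (iff_of_true h1 h2) hop
      · rw [if_pos h1, if_neg h2]; ring
      · rw [if_neg h1, if_pos h2]; ring
      · exact absurd (iff_of_false h1 h2) hop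
    rw [Finset.sum_congr rfl hone, Finset.sum_const, nsmul_eq_mul, mul_one]
  have hkey : ∑ l ∈ F \ D, (gfun S₁ x l + gfun S₂ x l) = 2 - (D.card : ℝ) := by
    have hsd := Finset.sum_sdiff (f := fun l => gfun S₁ x l + gfun S₂ x l) hDF
    rw [hDsum, htot] at hsd
    linarith
  -- parity facts
  have hSF : S₁ \ F = S₂ \ F := by
    ext l
    simp only [Finset.mem_sdiff]
    constructor
    · rintro ⟨hl1, hlF⟩
      have hlN := hS₁ hl1
      have hint : x l = 0 ∨ x l = 1 := by
        by_contra hcon; push_neg at hcon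
        exact hlF (Finset.mem_filter.2 ⟨hlN, hcon⟩)
      exact ⟨(hmem₂ l hlN hint).2 ((hmem₁ l hlN hint).1 hl1), hlF⟩
    · rintro ⟨hl2, hlF⟩
      have hlN := hS₂ hl2
      have hint : x l = 0 ∨ x l = 1 := by
        by_contra hcon; push_neg at hcon
        exact hlF (Finset.mem_filter.2 ⟨hlN, hcon⟩)
      exact ⟨(hmem₁ l hlN hint).2 ((hmem₂ l hlN hint).1 hl2), hlF⟩
  have hc₁ : A₁.card + (S₁ \ F).card = S₁.card :=
    Finset.card_inter_add_card_sdiff S₁ F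
  have hc₂ : A₂.card + (S₂ \ F).card = S₂.card :=
    Finset.card_inter_add_card_sdiff S₂ F
  have hd₁ : (A₁ ∩ A₂).card + (A₁ \ A₂).card = A₁.card :=
    Finset.card_inter_add_card_sdiff A₁ A₂
  have hd₂ : (A₂ ∩ A₁).card + (A₂ \ A₁).card = A₂.card :=
    Finset.card_inter_add_card_sdiff A₂ A₁
  have hcomm : (A₁ ∩ A₂).card = (A₂ ∩ A₁).card := by rw [Finset.inter_comm]
  have hdisj : Disjoint (A₁ \ A₂) (A₂ \ A₁) := by
    rw [Finset.disjoint_left]; intro a ha hb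
    exact (Finset.mem_sdiff.1 hb).2 (Finset.mem_sdiff.1 ha).1
  have hDcard : D.card = (A₁ \ A₂).card + (A₂ \ A₁).card :=
    Finset.card_union_of_disjoint hdisj
  have hsf : (S₁ \ F).card = (S₂ \ F).card := by rw [hSF]
  obtain ⟨a₁, hodd1'⟩ := hodd₁
  obtain ⟨a₂, hodd2'⟩ := hodd₂
  have hDeven : D.card % 2 = 0 := by omega
  by_cases hDe : D = ∅
  · have h12 : ∀ l ∈ F, (l ∈ S₁ ↔ l ∈ S₂) := by
      intro l hl
      by_contra hcon
      have : l ∈ D := (hDmem l hl).2 hcon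
      rw [hDe] at this
      exact absurd this (Finset.notMem_empty l)
    have hj' := h12 j hjF
    have hk' := h12 k hkF
    tauto
  · have hDne : D.Nonempty := Finset.nonempty_iff_ne_empty.2 hDe
    have hD2 : 2 ≤ D.card := by
      have := Finset.card_pos.2 hDne
      omega
    have hFD : F \ D = ∅ := by
      by_contra hcon
      obtain ⟨l, hl⟩ := Finset.nonempty_iff_ne_empty.2 hcon
      have hpos : 0 < ∑ l ∈ F \ D, (gfun S₁ x l + gfun S₂ x l) := by
        refine Finset.sum_pos (fun i hi => ?_) ⟨l, hl⟩
        have hiF := (Finset.mem_sdiff.1 hi).1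
        have h := hfrac i hiF
        have p1 := (gfun_pos hx S₁ i h.1 h.2).1
        have p2 := (gfun_pos hx S₂ i h.1 h.2).1
        linarith
      rw [hkey] at hpos
      have h2 : (2 : ℝ) ≤ (D.card : ℝ) := by exact_mod_cast hD2
      linarith
    have hFsub : F ⊆ D := by
      intro l hl
      by_contra hcon
      have : l ∈ F \ D := Finset.mem_sdiff.2 ⟨hl, hcon⟩
      rw [hFD] at this
      exact absurd this (Finset.notMem_empty l)
    have hjD := hFsub hjF
    have hkD := hFsub hkF
    have hj' := (hDmem j hjF).1 hjD
    have hk' := (hDmem k hkF).1 hkD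
    tauto

/-- At any non-integral point of the polytope there is a feasible perturbation direction. -/
lemma exists_direction {N : Finset (Fin n)} {x : Fin n → ℝ} (hx : x ∈ spcPoly N)
    (j0 : Fin n) (h0 : x j0 ≠ 0) (h1 : x j0 ≠ 1) :
    ∃ d : Fin n → ℝ, (∃ l, d l ≠ 0) ∧
      ∃ ε : ℝ, 0 < ε ∧ x + ε • d ∈ spcPoly N ∧ x - ε • d ∈ spcPoly N := by
  by_cases hcase : j0 ∈ N ∧ ∃ S, S ⊆ N ∧ Odd S.card ∧ Eval N S x = (S.card : ℝ) - 1
  · obtain ⟨hj0N, S₀, hS₀, hodd₀, ht₀⟩ := hcase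
    obtain ⟨k, hkN, ⟨hk0, hk1⟩, hkj0⟩ := exists_second_frac hx hj0N h0 h1 hS₀ ht₀
    set c : ℝ := if ((j0 ∈ S₀) ↔ (k ∈ S₀)) then -1 else 1 with hc
    set d : Fin n → ℝ := fun l => if l = j0 then 1 else if l = k then c else 0 with hd
    have hkj0' : j0 ≠ k := fun h => hkj0 h.symm
    have hdj0 : d j0 = 1 := by simp [hd]
    have hcabs : c = -1 ∨ c = 1 := by
      rw [hc]; split_ifs <;> simp
    refine ⟨d, ⟨j0, by rw [hdj0]; norm_num⟩, ?_⟩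
    apply exists_perturb N x d hx
    · intro l hl
      rw [hd] at hl
      by_cases e1 : l = j0
      · subst e1
        exact ⟨lt_of_le_of_ne (hx.1 l).1 (Ne.symm h0), lt_of_le_of_ne (hx.1 l).2 h1⟩
      · by_cases e2 : l = k
        · subst e2
          exact ⟨lt_of_le_of_ne (hx.1 l).1 (Ne.symm hk0), lt_of_le_of_ne (hx.1 l).2 hk1⟩
        · simp [e1, e2] at hl
    · intro l
      rw [hd]
      by_cases e1 : l = j0
      · simp [e1]
      · by_cases e2 : l = k
        · rcases hcabs with h | h <;> simp [e1, e2, h, hkj0]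
        · simp [e1, e2]
    · intro S hS hodd ht
      have hdind : d = fun l => (if l = j0 then (1:ℝ) else 0) + (if l = k then c else 0) := by
        funext l
        simp only [hd]
        by_cases e1 : l = j0 <;> simp [e1, hkj0']
      have hsumT : ∀ T : Finset (Fin n),
          ∑ l ∈ T, d l = (if j0 ∈ T then (1:ℝ) else 0) + (if k ∈ T then c else 0) := by
        intro T
        rw [hdind]
        rw [Finset.sum_add_distrib, Finset.sum_ite_eq' T j0 (fun _ => (1:ℝ)),
          Finset.sum_ite_eq' T k (fun _ => c)]
      have hside := tight_sides hx hj0N h0 h1 hkN hk0 hk1 hS hS₀ hodd hodd₀ ht ht₀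
      unfold Eval
      rw [hsumT, hsumT]
      have hj0sd : (j0 ∈ N \ S) ↔ ¬ (j0 ∈ S) := by simp [Finset.mem_sdiff, hj0N]
      have hksd : (k ∈ N \ S) ↔ ¬ (k ∈ S) := by simp [Finset.mem_sdiff, hkN]
      by_cases h₀ : (j0 ∈ S₀) ↔ (k ∈ S₀)
      · have hcm1 : c = -1 := by rw [hc, if_pos h₀]
        have hsm : (j0 ∈ S) ↔ (k ∈ S) := hside.2 h₀
        by_cases hj0S : j0 ∈ S
        · have hkS : k ∈ S := hsm.1 hj0S
          have n1 : j0 ∉ N \ S := fun h => (hj0sd.1 h) hj0S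
          have n2 : k ∉ N \ S := fun h => (hksd.1 h) hkS
          rw [if_pos hj0S, if_pos hkS, if_neg n1, if_neg n2, hcm1]; ring
        · have hkS : k ∉ S := fun h => hj0S (hsm.2 h)
          have n1 : j0 ∈ N \ S := hj0sd.2 hj0S
          have n2 : k ∈ N \ S := hksd.2 hkS
          rw [if_neg hj0S, if_neg hkS, if_pos n1, if_pos n2, hcm1]; ring
      · have hcm1 : c = 1 := by rw [hc, if_neg h₀]
        have hsm : ¬ ((j0 ∈ S) ↔ (k ∈ S)) := fun h => h₀ (hside.1 h)
        by_cases hj0S : j0 ∈ S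
        · have hkS : k ∉ S := fun h => hsm (iff_of_true hj0S h)
          have n1 : j0 ∉ N \ S := fun h => (hj0sd.1 h) hj0S
          have n2 : k ∈ N \ S := hksd.2 hkS
          rw [if_pos hj0S, if_neg hkS, if_neg n1, if_pos n2, hcm1]; ring
        · have hkS : k ∈ S := by
            by_contra h
            exact hsm (iff_of_false hj0S h)
          have n1 : j0 ∈ N \ S := hj0sd.2 hj0S
          have n2 : k ∉ N \ S := fun h => (hksd.1 h) hkS
          rw [if_neg hj0S, if_pos hkS, if_pos n1, if_neg n2, hcm1]; ring
  · refine ⟨fun l => if l = j0 then 1 else 0, ⟨j0, by simp⟩, ?_⟩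
    apply exists_perturb N x _ hx
    · intro l hl
      have hlj : l = j0 := by
        by_contra h; simp [h] at hl
      subst hlj
      exact ⟨lt_of_le_of_ne (hx.1 l).1 (Ne.symm h0), lt_of_le_of_ne (hx.1 l).2 h1⟩
    · intro l; by_cases h : l = j0 <;> simp [h]
    · intro S hS hodd ht
      by_cases hj0N : j0 ∈ N
      · exact absurd ⟨hj0N, S, hS, hodd, ht⟩ hcase
      · have hj0S : j0 ∉ S := fun h => hj0N (hS h)
        have hj0NS : j0 ∉ N \ S := fun h => hj0N (Finset.mem_sdiff.1 h).1
        have e1 : ∑ l ∈ S, (if l = j0 then (1:ℝ) else 0) = 0 :=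
          Finset.sum_eq_zero fun l hl => if_neg (by rintro rfl; exact hj0S hl)
        have e2 : ∑ l ∈ N \ S, (if l = j0 then (1:ℝ) else 0) = 0 :=
          Finset.sum_eq_zero fun l hl => if_neg (by rintro rfl; exact hj0NS hl)
        unfold Eval
        rw [e1, e2, sub_zero]

lemma extremePoints_subset_code (N : Finset (Fin n)) :
    (spcPoly N).extremePoints ℝ ⊆ spcCode N := by
  intro x hx
  obtain ⟨hxP, hext⟩ := hx
  have hint : ∀ j, x j = 0 ∨ x j = 1 := by
    intro j
    by_contra hcon
    push_neg at hcon
    obtain ⟨d, ⟨l, hdl⟩, ε, hε, hy, hz⟩ := exists_direction hxP j hcon.1 hcon.2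
    have hseg : x ∈ openSegment ℝ (x + ε • d) (x - ε • d) := by
      refine ⟨1/2, 1/2, by norm_num, by norm_num, by norm_num, ?_⟩
      funext i
      simp only [Pi.add_apply, Pi.sub_apply, Pi.smul_apply, smul_eq_mul]
      ring
    have h1 := (hext hy hz hseg)
    have h2 : x l + ε * d l = x l := by
      have := congrFun h1 l
      simpa using this
    have h3 : ε * d l = 0 := by linarith
    rcases mul_eq_zero.1 h3 with h | h
    · exact absurd h (ne_of_gt hε)
    · exact hdl h
  refine ⟨hint, ?_⟩
  set M := N.filter (fun j => x j = 1) with hM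
  have hsum : ∑ j ∈ N, x j = (M.card : ℝ) := sum_01 hint N
  have hpar : ¬ Odd M.card := by
    intro hodd
    have hle := hxP.2 M (Finset.filter_subset _ _) hodd
    have e1 : ∑ j ∈ M, x j = (M.card : ℝ) := by
      rw [Finset.sum_congr rfl (fun j hj => (Finset.mem_filter.1 hj).2)]; simp [hM]
    have e2 : ∑ j ∈ N \ M, x j = 0 := by
      refine Finset.sum_eq_zero fun j hj => ?_
      have hj' := Finset.mem_sdiff.1 hj
      rcases hint j with h | h
      · exact h
      · exact absurd (Finset.mem_filter.2 ⟨hj'.1, h⟩) hj'.2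
    rw [e1, e2] at hle
    linarith
  rw [Nat.not_odd_iff_even] at hpar
  obtain ⟨t, ht⟩ := hpar
  exact ⟨t, by rw [hsum, ht]; push_cast; ring⟩

end SPCaux

theorem spc_convexHull (n : ℕ) (N : Finset (Fin n)) :
    convexHull ℝ {x : Fin n → ℝ |
        (∀ j, x j = 0 ∨ x j = 1) ∧ ∃ k : ℕ, ∑ j ∈ N, x j = 2 * k} =
    {x : Fin n → ℝ | (∀ j, 0 ≤ x j ∧ x j ≤ 1) ∧
      ∀ S ⊆ N, Odd S.card →
        ∑ j ∈ S, x j - ∑ j ∈ N \ S, x j ≤ (S.card : ℝ) - 1} := by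
  show convexHull ℝ (SPCaux.spcCode N) = SPCaux.spcPoly N
  apply Set.Subset.antisymm
  · exact convexHull_min (SPCaux.spcCode_subset N) (SPCaux.spcPoly_convex N)
  · have h1 := closure_convexHull_extremePoints (SPCaux.spcPoly_isCompact N)
      (SPCaux.spcPoly_convex N)
    calc SPCaux.spcPoly N
        = closure (convexHull ℝ ((SPCaux.spcPoly N).extremePoints ℝ)) := h1.symm
      _ ⊆ closure (convexHull ℝ (SPCaux.spcCode N)) :=
          closure_mono (convexHull_mono (SPCaux.extremePoints_subset_code N))
      _ = convexHull ℝ (SPCaux.spcCode N) :=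
          (Set.Finite.isClosed_convexHull (𝕜 := ℝ) (SPCaux.spcCode_finite N)).closure_eq
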